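/- With E, C, F, D_y as in the Model II construction (v_D, v_Q, i_D, i_Q real diagonal n×n matrices, D₁ real symmetric, E = [[v_D, v_Q], [-v_Q, v_D]], C = [[i_D, i_Q], [i_Q, -i_D]], F = [[v_Q, v_D], [-v_D, v_Q]], D_y = [[D₁,0],[0,D₁]]), if the matrix (E·D_y + C)·F + ((E·D_y + C)·F)ᵀ is positive semidefinite, then it is the zero matrix. -/

import Mathlib

open Matrix

private lemma trace_fromBlocks' {m : Type*} [Fintype m] [DecidableEq m]
    (A B C D : Matrix m m ℝ) :
    (fromBlocks A B C D).trace = A.trace + D.trace := by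
  simp [Matrix.trace, Matrix.diag, Fintype.sum_sum_type, fromBlocks]

private lemma psd_trace_zero {m : Type*} [Fintype m] [DecidableEq m]
    {A : Matrix m m ℝ} (hA : A.PosSemidef) (ht : A.trace = 0) : A = 0 := by
  exact hA.trace_eq_zero_iff.mp ht

theorem modelII_feedthrough_symm_part_eq_zero_of_posSemidef (n : ℕ)
    (vD vQ iD iQ D₁ : Matrix (Fin n) (Fin n) ℝ)
    (hvD : vD.IsDiag) (hvQ : vQ.IsDiag) (hiD : iD.IsDiag) (hiQ : iQ.IsDiag)
    (hD₁ : D₁ᵀ = D₁)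
    (D₂ : Matrix (Fin n ⊕ Fin n) (Fin n ⊕ Fin n) ℝ)
    (hD₂ : D₂ = (fromBlocks vD vQ (-vQ) vD * fromBlocks D₁ 0 0 D₁
        + fromBlocks iD iQ iQ (-iD)) * fromBlocks vQ vD (-vD) vQ)
    (hpsd : (D₂ + D₂ᵀ).PosSemidef) :
    D₂ + D₂ᵀ = 0 := by
  apply psd_trace_zero hpsd
  have hcomm : vD * vQ = vQ * vD := by
    rw [hvD.diagonal_diag.symm, hvQ.diagonal_diag.symm, Matrix.diagonal_mul_diagonal,
      Matrix.diagonal_mul_diagonal]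
    simp [mul_comm]
  have htr : D₂.trace = 0 := by
    rw [hD₂, Matrix.add_mul, Matrix.fromBlocks_multiply, Matrix.fromBlocks_multiply,
      Matrix.fromBlocks_multiply, Matrix.fromBlocks_add, trace_fromBlocks']
    have h1 : (vD * D₁ * vQ).trace = (vQ * D₁ * vD).trace := by
      rw [Matrix.trace_mul_cycle]
      conv_rhs => rw [Matrix.trace_mul_comm, ← Matrix.mul_assoc, hcomm]
    simp only [Matrix.mul_zero, Matrix.zero_mul, add_zero, zero_add,
      Matrix.neg_mul, Matrix.mul_neg, Matrix.trace_neg, Matrix.trace_add]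
    linarith [h1]
  rw [Matrix.trace_add, Matrix.trace_transpose, htr, add_zero]
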